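/- Conjugacy of the P_λ mixture prior: let r ≥ 0 be real and s > 0, and let the prior density be p(λ) ∝ (1/2)λ^{-c-1} e^{-d/λ} / Z(c,0,2d) + (1/2)λ^{c-1} e^{-dλ} / Z(c,0,2d) with Z(c,0,2d) = Γ(c)/d^c. Then the posterior density proportional to λ^r e^{-sλ} p(λ) is the mixture π · GIG(−c+r, 2d, 2s) + (1−π) · GIG(c+r, 0, 2(d+s)) with mixture weight π = Z(−c+r, 2d, 2s) / (Z(−c+r, 2d, 2s) + Z(c+r, 0, 2(d+s))), where Z(η, χ, ψ) = ∫₀^∞ λ^{η−1} exp(−(χ/λ + ψλ)/2) dλ; in particular the marginal likelihood equals (Z(−c+r, 2d, 2s) + Z(c+r, 0, 2(d+s)))/(2Z(c,0,2d)). -/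

import Mathlib

open MeasureTheory Real

/-- GIG normalizing constant Z(η, χ, ψ) = ∫₀^∞ λ^{η-1} exp(-(χ/λ + ψλ)/2) dλ. -/
noncomputable def Znorm (η χ ψ : ℝ) : ℝ :=
  ∫ l in Set.Ioi (0:ℝ), l ^ (η - 1) * Real.exp (-(χ / l + ψ * l) / 2)

/-- GIG density with parameters (η, χ, ψ). -/
noncomputable def gigPdf (η χ ψ : ℝ) (l : ℝ) : ℝ :=
  l ^ (η - 1) * Real.exp (-(χ / l + ψ * l) / 2) / Znorm η χ ψ

lemma gamma_int {a b : ℝ} (ha : -1 < a) (hb : 0 < b) :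
    IntegrableOn (fun x : ℝ => x ^ a * Real.exp (-b * x)) (Set.Ioi 0) := by
  have := integrableOn_rpow_mul_exp_neg_mul_rpow ha (zero_lt_one : (0:ℝ) < 1) hb
  refine this.congr_fun (fun x hx => ?_) measurableSet_Ioi
  simp only [Real.rpow_one]

lemma znorm_meas (η χ ψ : ℝ) :
    AEStronglyMeasurable (fun l : ℝ => l ^ (η - 1) * Real.exp (-(χ / l + ψ * l) / 2))
      (volume.restrict (Set.Ioi 0)) := by
  refine Measurable.aestronglyMeasurable ?_
  have h1 : Measurable fun l : ℝ => l ^ (η - 1) := by measurability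
  have h2 : Measurable fun l : ℝ => -(χ / l + ψ * l) / 2 :=
    (((measurable_const.div measurable_id).add (measurable_id.const_mul ψ)).neg).div_const 2
  exact h1.mul (Real.measurable_exp.comp h2)

lemma znorm_int {η χ ψ : ℝ} (hχ : 0 ≤ χ) (hψ : 0 < ψ) (h : 0 < η ∨ 0 < χ) :
    IntegrableOn (fun l : ℝ => l ^ (η - 1) * Real.exp (-(χ / l + ψ * l) / 2))
      (Set.Ioi 0) := by
  rcases h with hη | hχ'
  · refine Integrable.mono' (gamma_int (a := η - 1) (b := ψ / 2) (by linarith) (by linarith))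
      (znorm_meas η χ ψ) ?_
    filter_upwards [ae_restrict_mem measurableSet_Ioi] with l hl
    have hl0 : (0:ℝ) < l := hl
    rw [Real.norm_eq_abs, abs_mul, abs_of_nonneg (Real.rpow_nonneg hl0.le _), abs_of_nonneg (Real.exp_pos _).le]
    have hle : Real.exp (-(χ / l + ψ * l) / 2) ≤ Real.exp (-(ψ / 2) * l) := by
      rw [Real.exp_le_exp]
      have : 0 ≤ χ / l := div_nonneg hχ hl0.le
      nlinarith
    exact mul_le_mul_of_nonneg_left hle (Real.rpow_nonneg hl0.le _)
  · obtain ⟨n, hnη⟩ : ∃ n : ℕ, -η < (n:ℝ) := exists_nat_gt (-η)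
    refine Integrable.mono'
      ((gamma_int (a := η - 1 + n) (b := ψ / 2) (by push_cast; linarith) (by linarith)).const_mul
        ((n.factorial : ℝ) * (2 / χ) ^ n)) (znorm_meas η χ ψ) ?_
    filter_upwards [ae_restrict_mem measurableSet_Ioi] with l hl
    have hl0 : (0:ℝ) < l := hl
    rw [Real.norm_eq_abs, abs_mul, abs_of_nonneg (Real.rpow_nonneg hl0.le _), abs_of_nonneg (Real.exp_pos _).le]
    have hsplit : -(χ / l + ψ * l) / 2 = -(χ / (2 * l)) + -(ψ / 2) * l := by
      field_simp; ring
    rw [hsplit, Real.exp_add]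
    have hx : 0 < χ / (2 * l) := by positivity
    have hexp : Real.exp (-(χ / (2 * l))) ≤ (n.factorial : ℝ) * (2 / χ) ^ n * l ^ (n:ℕ) := by
      have h1 : (χ / (2 * l)) ^ n ≤ Real.exp (χ / (2 * l)) * (n.factorial : ℝ) := by
        have := Real.pow_div_factorial_le_exp (x := χ / (2 * l)) hx.le n
        rw [div_le_iff₀ (by positivity : (0:ℝ) < (n.factorial : ℝ))] at this
        linarith
      have h2 : Real.exp (-(χ / (2 * l))) ≤ (n.factorial : ℝ) / (χ / (2 * l)) ^ n := by
        rw [Real.exp_neg, inv_eq_one_div,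
          div_le_div_iff₀ (Real.exp_pos _) (pow_pos hx n)]
        nlinarith
      have h3 : (n.factorial : ℝ) / (χ / (2 * l)) ^ n
          = (n.factorial : ℝ) * (2 / χ) ^ n * l ^ (n:ℕ) := by
        rw [div_pow, div_pow]
        have hχ0 : χ ≠ 0 := ne_of_gt hχ'
        have hl0' : l ≠ 0 := ne_of_gt hl0
        field_simp
        ring
      linarith [h2, h3.le]
    calc l ^ (η - 1) * (Real.exp (-(χ / (2 * l))) * Real.exp (-(ψ / 2) * l))
        ≤ l ^ (η - 1) * (((n.factorial : ℝ) * (2 / χ) ^ n * l ^ (n:ℕ)) * Real.exp (-(ψ / 2) * l)) := by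
          have h4 := Real.rpow_nonneg hl0.le (η - 1)
          have h5 := (Real.exp_pos (-(ψ / 2) * l)).le
          exact mul_le_mul_of_nonneg_left (mul_le_mul_of_nonneg_right hexp h5) h4
      _ = (n.factorial : ℝ) * (2 / χ) ^ n * (l ^ (η - 1 + (n:ℝ)) * Real.exp (-(ψ / 2) * l)) := by
          rw [Real.rpow_add hl0, Real.rpow_natCast]; ring

lemma znorm_pos {η χ ψ : ℝ} (hχ : 0 ≤ χ) (hψ : 0 < ψ) (h : 0 < η ∨ 0 < χ) :
    0 < Znorm η χ ψ := by
  rw [Znorm]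
  refine (setIntegral_pos_iff_support_of_nonneg_ae ?_ (znorm_int hχ hψ h)).mpr ?_
  · filter_upwards [ae_restrict_mem measurableSet_Ioi] with l hl
    have hl0 : (0:ℝ) < l := hl
    positivity
  · have hsub : Set.Ioi (0:ℝ) ⊆ Function.support
        (fun l : ℝ => l ^ (η - 1) * Real.exp (-(χ / l + ψ * l) / 2)) := by
      intro l hl
      have hl0 : (0:ℝ) < l := hl
      exact ne_of_gt (mul_pos (Real.rpow_pos_of_pos hl0 _) (Real.exp_pos _))
    refine lt_of_lt_of_le ?_ (measure_mono (Set.subset_inter hsub subset_rfl))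
    rw [Real.volume_Ioi]
    simp

/-- Conjugacy of the P_λ mixture prior to the Poisson-type likelihood
λ^r e^{-sλ}: the posterior is a two-component GIG mixture with weight
π = Z(-c+r, 2d, 2s)/(Z(-c+r, 2d, 2s) + Z(c+r, 0, 2(d+s))), and the marginal
likelihood is (Z(-c+r, 2d, 2s) + Z(c+r, 0, 2(d+s)))/(2 Z(c, 0, 2d)). -/
theorem plambda_conjugacy (c d r s : ℝ) (hc : 0 < c) (hd : 0 < d)
    (hr : 0 ≤ r) (hs : 0 < s)
    (p : ℝ → ℝ)
    (hp : ∀ l : ℝ, p l =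
      (1/2) * (l ^ (-c - 1) * Real.exp (-(d / l))) / Znorm c 0 (2 * d)
        + (1/2) * (l ^ (c - 1) * Real.exp (-(d * l))) / Znorm c 0 (2 * d)) :
    (∀ l : ℝ, 0 < l →
      l ^ r * Real.exp (-(s * l)) * p l =
        ((Znorm (-c + r) (2 * d) (2 * s) + Znorm (c + r) 0 (2 * (d + s)))
            / (2 * Znorm c 0 (2 * d))) *
          ((Znorm (-c + r) (2 * d) (2 * s)
              / (Znorm (-c + r) (2 * d) (2 * s) + Znorm (c + r) 0 (2 * (d + s)))) *
              gigPdf (-c + r) (2 * d) (2 * s) l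
            + (Znorm (c + r) 0 (2 * (d + s))
              / (Znorm (-c + r) (2 * d) (2 * s) + Znorm (c + r) 0 (2 * (d + s)))) *
              gigPdf (c + r) 0 (2 * (d + s)) l)) ∧
    (∫ l in Set.Ioi (0:ℝ), l ^ r * Real.exp (-(s * l)) * p l)
      = (Znorm (-c + r) (2 * d) (2 * s) + Znorm (c + r) 0 (2 * (d + s)))
          / (2 * Znorm c 0 (2 * d)) := by
  have hZa : 0 < Znorm (-c + r) (2 * d) (2 * s) :=
    znorm_pos (by linarith) (by linarith) (Or.inr (by linarith))
  have hZb : 0 < Znorm (c + r) 0 (2 * (d + s)) :=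
    znorm_pos le_rfl (by linarith) (Or.inl (by linarith))
  have hZ0 : 0 < Znorm c 0 (2 * d) :=
    znorm_pos le_rfl (by linarith) (Or.inl hc)
  have hA : 0 < Znorm (-c + r) (2 * d) (2 * s) + Znorm (c + r) 0 (2 * (d + s)) := by linarith
  -- pointwise identity
  have key : ∀ l : ℝ, 0 < l →
      l ^ r * Real.exp (-(s * l)) * p l =
        (1 / (2 * Znorm c 0 (2 * d))) *
          (l ^ ((-c + r) - 1) * Real.exp (-(2 * d / l + 2 * s * l) / 2)
            + l ^ ((c + r) - 1) * Real.exp (-(0 / l + 2 * (d + s) * l) / 2)) := by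
    intro l hl
    have e1 : l ^ ((-c + r) - 1) = l ^ r * l ^ (-c - 1) := by
      rw [← Real.rpow_add hl]; ring_nf
    have e2 : l ^ ((c + r) - 1) = l ^ r * l ^ (c - 1) := by
      rw [← Real.rpow_add hl]; ring_nf
    have e3 : Real.exp (-(2 * d / l + 2 * s * l) / 2)
        = Real.exp (-(s * l)) * Real.exp (-(d / l)) := by
      rw [← Real.exp_add]
      congr 1
      field_simp
      ring
    have e4 : Real.exp (-(0 / l + 2 * (d + s) * l) / 2)
        = Real.exp (-(s * l)) * Real.exp (-(d * l)) := by
      rw [← Real.exp_add]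
      congr 1
      rw [zero_div]
      ring
    rw [hp l, e1, e2, e3, e4]
    field_simp
  refine ⟨?_, ?_⟩
  · intro l hl
    rw [key l hl, gigPdf, gigPdf]
    field_simp
  · rw [setIntegral_congr_fun measurableSet_Ioi (fun l hl => key l hl)]
    rw [integral_const_mul]
    rw [integral_add (znorm_int (by linarith) (by linarith) (Or.inr (by linarith)))
      (znorm_int le_rfl (by linarith) (Or.inl (by linarith)))]
    rw [show (∫ l in Set.Ioi (0:ℝ), l ^ ((-c + r) - 1) * Real.exp (-(2 * d / l + 2 * s * l) / 2))
        = Znorm (-c + r) (2 * d) (2 * s) from rfl,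
      show (∫ l in Set.Ioi (0:ℝ), l ^ ((c + r) - 1) * Real.exp (-(0 / l + 2 * (d + s) * l) / 2))
        = Znorm (c + r) 0 (2 * (d + s)) from rfl]
    field_simp
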